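/- Let A be a prefix-free, left-total set of finite binary strings. If α and β are infinite binary sequences such that every finite prefix of α has both a total extension and a non-total extension with respect to A, and likewise every finite prefix of β has both a total extension and a non-total extension with respect to A, then α = β. -/

import Mathlib

/-- The first `n` bits of an infinite binary sequence, as a finite string. -/
def firstN (α : ℕ → Bool) (n : ℕ) : List Bool := List.ofFn fun i : Fin n => α i

/-- A set of finite binary strings is prefix-free if no element is a proper prefix
of another element. -/
def PrefixFree (A : Set (List Bool)) : Prop :=
  ∀ x ∈ A, ∀ y ∈ A, x <+: y → x = y

/-- `x` is total with respect to `A` if every infinite binary sequence extending `x`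
has some finite prefix belonging to `A`. -/
def TotalFor (A : Set (List Bool)) (x : List Bool) : Prop :=
  ∀ α : ℕ → Bool, (∀ i : Fin x.length, α i = x.get i) → ∃ n : ℕ, firstN α n ∈ A

/-- `x` is to the left of `y`: some `z ++ [false]` is a prefix of `x` while
`z ++ [true]` is a prefix of `y`. -/
def LeftOf (x y : List Bool) : Prop :=
  ∃ z : List Bool, z ++ [false] <+: x ∧ z ++ [true] <+: y

/-- `A` is left-total if every finite string to the left of some element of `A`
is total with respect to `A`. -/
def LeftTotal (A : Set (List Bool)) : Prop :=
  ∀ x y : List Bool, y ∈ A → LeftOf x y → TotalFor A x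

lemma firstN_length (α : ℕ → Bool) (n : ℕ) : (firstN α n).length = n := by
  simp [firstN]

lemma firstN_agree (δ : ℕ → Bool) (l : List Bool)
    (h : ∀ i : Fin l.length, δ i = l.get i) (k : ℕ) (hk : k ≤ l.length) :
    firstN δ k = l.take k := by
  apply List.ext_get
  · simp [firstN_length, hk]
  · intro i h1 h2
    rw [firstN_length] at h1
    simp only [firstN, List.get_ofFn, Fin.coe_cast, List.get_eq_getElem,
      List.getElem_take, List.getElem_ofFn]
    simpa using h ⟨i, lt_of_lt_of_le h1 hk⟩

lemma firstN_prefix (δ : ℕ → Bool) {k m : ℕ} (h : k ≤ m) :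
    firstN δ k <+: firstN δ m := by
  have : firstN δ k = (firstN δ m).take k := by
    apply List.ext_get
    · simp [firstN_length, h]
    · intro i h1 h2
      simp only [firstN, List.get_ofFn, Fin.coe_cast, List.get_eq_getElem,
        List.getElem_take, List.getElem_ofFn]
  rw [this]; exact List.take_prefix _ _

lemma firstN_succ (α : ℕ → Bool) (n : ℕ) :
    firstN α (n + 1) = firstN α n ++ [α n] := by
  show List.ofFn _ = _
  rw [List.ofFn_succ']
  simp [firstN, List.concat_eq_append]

/-- Key lemma: if some total string extends `z ++ [true]`, then every string
extending `z ++ [false]` is total. -/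
lemma total_of_left (A : Set (List Bool)) (hlt : LeftTotal A) (z : List Bool)
    (e : List Bool) (he : z ++ [true] <+: e) (hte : TotalFor A e)
    (w : List Bool) (hw : z ++ [false] <+: w) : TotalFor A w := by
  classical
  set γ : ℕ → Bool := fun i => if h : i < e.length then e.get ⟨i, h⟩ else false with hγdef
  have hγ : ∀ i : Fin e.length, γ i = e.get i := by
    intro i; simp [hγdef, i.isLt]
  obtain ⟨m, hm⟩ := hte γ hγ
  have hlen : z.length + 1 ≤ e.length := by
    have := he.length_le; simpa using this
  have hz1 : firstN γ (z.length + 1) = z ++ [true] := by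
    rw [firstN_agree γ e hγ _ hlen]
    obtain ⟨t, ht⟩ := he
    rw [← ht, List.take_append_of_le_length (by simp)]
    simp
  by_cases hcmp : z.length + 1 ≤ m
  · -- z ++ [true] is a prefix of the element of A, use left-totality
    have hpre : z ++ [true] <+: firstN γ m := by
      rw [← hz1]; exact firstN_prefix γ hcmp
    exact hlt w _ hm ⟨z, hw, hpre⟩
  · -- the element of A is a prefix of z, hence of w: w total trivially
    push_neg at hcmp
    have hmz : m ≤ z.length := Nat.lt_succ_iff.mp hcmp
    have haz : firstN γ m <+: z := by
      have h1 : firstN γ m = e.take m := firstN_agree γ e hγ m (by omega)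
      have hz' : z <+: e := (z.prefix_append [true]).trans he
      obtain ⟨t, ht⟩ := hz'
      have h2 : e.take m = z.take m := by
        rw [← ht, List.take_append_of_le_length hmz]
      rw [h1, h2]
      exact List.take_prefix _ _
    have haw : firstN γ m <+: w :=
      haz.trans ((z.prefix_append [false]).trans hw)
    intro δ hδ
    refine ⟨m, ?_⟩
    have hlenm : (firstN γ m).length = m := firstN_length γ m
    have hmw : m ≤ w.length := by
      have := haw.length_le; rwa [hlenm] at this
    have : firstN δ m = w.take m := firstN_agree δ w hδ m hmw
    rw [this]
    obtain ⟨t, ht⟩ := haw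
    rw [← ht, List.take_append_of_le_length (le_of_eq hlenm.symm), List.take_of_length_le (le_of_eq hlenm)]
    exact hm

theorem stmt_10
    (A : Set (List Bool)) (hpf : PrefixFree A) (hlt : LeftTotal A)
    (α β : ℕ → Bool)
    (hα : ∀ n : ℕ, (∃ e : List Bool, firstN α n <+: e ∧ TotalFor A e) ∧
      (∃ e : List Bool, firstN α n <+: e ∧ ¬TotalFor A e))
    (hβ : ∀ n : ℕ, (∃ e : List Bool, firstN β n <+: e ∧ TotalFor A e) ∧
      (∃ e : List Bool, firstN β n <+: e ∧ ¬TotalFor A e)) :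
    α = β := by
  classical
  by_contra hne
  have hex : ∃ n, α n ≠ β n := by
    by_contra h
    push_neg at h
    exact hne (funext h)
  set n := Nat.find hex with hn
  have hdiff : α n ≠ β n := Nat.find_spec hex
  have hagree : ∀ i < n, α i = β i := fun i hi => by
    by_contra h; exact Nat.find_min hex hi h
  have hz : firstN α n = firstN β n := by
    simp only [firstN]
    congr 1
    funext i
    exact hagree i i.isLt
  set z := firstN α n with hzdef
  have hαs : firstN α (n + 1) = z ++ [α n] := firstN_succ α n
  have hβs : firstN β (n + 1) = z ++ [β n] := by
    rw [firstN_succ β n, ← hz]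
  cases hab : α n with
  | false =>
    have hb : β n = true := by
      cases hb : β n
      · exact absurd (hab.trans hb.symm) hdiff
      · rfl
    obtain ⟨e, hepre, hetot⟩ := (hβ (n + 1)).1
    obtain ⟨w, hwpre, hwnot⟩ := (hα (n + 1)).2
    rw [hβs, hb] at hepre
    rw [hαs, hab] at hwpre
    exact hwnot (total_of_left A hlt z e hepre hetot w hwpre)
  | true =>
    have hb : β n = false := by
      cases hb : β n
      · rfl
      · exact absurd (hab.trans hb.symm) hdiff
    obtain ⟨e, hepre, hetot⟩ := (hα (n + 1)).1
    obtain ⟨w, hwpre, hwnot⟩ := (hβ (n + 1)).2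
    rw [hαs, hab] at hepre
    rw [hβs, hb] at hwpre
    exact hwnot (total_of_left A hlt z e hepre hetot w hwpre)
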